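/- Let N ≥ 2, β > 0, λ ≥ 0, ρ ∈ (0,1/2), ρ₀ = 1-2ρ. Let g_i, h_i : [0,∞) → ℝ satisfy g_i(t) = g_i(0) e^{-Nβρ₀ t} and, for all i, j, the differential inequality (h_i - h_j)'(t) ≤ -Nβ(h_i - h_j)(t) + (λNρ₀/2)(g_i(t)² - g_j(t)²). Then for ρ ≠ 1/4: h_i(t) - h_j(t) ≤ (h_i(0) - h_j(0)) e^{-Nβt} + [(1-2ρ)λ(g_i(0)² - g_j(0)²)/(2β(4ρ-1))] (e^{-(2-4ρ)Nβt} - e^{-Nβt}), and in particular lim_{t→∞}(h_i(t) - h_j(t)) ≤ 0 if additionally the symmetric inequality holds with i and j swapped, then h_i(t) - h_j(t) → 0 as t → ∞. -/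

import Mathlib

open Filter

lemma gron_core (a : ℝ) (u D F F' : ℝ → ℝ)
    (hu : ∀ t ≥ (0:ℝ), HasDerivAt u (D t) t)
    (hF : ∀ t, HasDerivAt F (F' t) t)
    (hD : ∀ t ≥ (0:ℝ), Real.exp (a * t) * (a * u t + D t) ≤ F' t) :
    ∀ t ≥ (0:ℝ), Real.exp (a * t) * u t ≤ u 0 - F 0 + F t := by
  have hw' : ∀ t ≥ (0:ℝ), HasDerivAt (fun s => Real.exp (a * s) * u s - F s)
      (Real.exp (a*t) * a * u t + Real.exp (a*t) * D t - F' t) t := by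
    intro t ht
    have h1 := ((((hasDerivAt_id t).const_mul a).exp).mul (hu t ht)).sub (hF t)
    refine h1.congr_deriv ?_
    simp only [id_eq]
    ring
  have hA : AntitoneOn (fun s => Real.exp (a * s) * u s - F s) (Set.Ici 0) := by
    apply antitoneOn_of_deriv_nonpos (convex_Ici 0)
    · intro t ht
      exact ((hw' t ht).continuousAt).continuousWithinAt
    · intro t ht
      rw [interior_Ici] at ht
      exact ((hw' t ht.le).differentiableAt).differentiableWithinAt
    · intro t ht
      rw [interior_Ici] at ht
      rw [(hw' t ht.le).deriv]
      nlinarith [hD t ht.le]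
  intro t ht
  have h2 := hA Set.self_mem_Ici ht ht
  simp only [mul_zero, Real.exp_zero, one_mul] at h2
  linarith

lemma gron_ne (a b c : ℝ) (u D : ℝ → ℝ) (hr : a + b ≠ 0)
    (hu : ∀ t ≥ (0:ℝ), HasDerivAt u (D t) t)
    (hD : ∀ t ≥ (0:ℝ), D t ≤ -a * u t + c * Real.exp (b * t)) :
    ∀ t ≥ (0:ℝ), u t ≤ u 0 * Real.exp (-(a*t))
      + (c/(a+b)) * (Real.exp (b*t) - Real.exp (-(a*t))) := by
  have hF : ∀ t, HasDerivAt (fun s => (c/(a+b)) * Real.exp ((a+b)*s))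
      (c * Real.exp ((a+b)*t)) t := by
    intro t
    have h1 := (((hasDerivAt_id t).const_mul (a+b)).exp).const_mul (c/(a+b))
    refine h1.congr_deriv ?_
    simp only [id_eq]
    field_simp
  have hcore := gron_core a u D _ _ hu hF ?_
  · intro t ht
    have h2 := hcore t ht
    have key : Real.exp (-(a*t)) * Real.exp (a*t) = 1 := by
      rw [← Real.exp_add]; simp
    have e1 : Real.exp (-(a*t)) * Real.exp ((a+b)*t) = Real.exp (b*t) := by
      rw [← Real.exp_add]; congr 1; ring
    have h3 := mul_le_mul_of_nonneg_left h2 (Real.exp_pos (-(a*t))).le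
    calc u t = Real.exp (-(a*t)) * (Real.exp (a*t) * u t) := by
              rw [← mul_assoc, key, one_mul]
      _ ≤ Real.exp (-(a*t)) * (u 0 - (c/(a+b)) * Real.exp ((a+b)*0)
            + (c/(a+b)) * Real.exp ((a+b)*t)) := h3
      _ = u 0 * Real.exp (-(a*t))
            + (c/(a+b)) * (Real.exp (b*t) - Real.exp (-(a*t))) := by
              rw [mul_zero, Real.exp_zero, ← e1]; ring
  · intro t ht
    have h1 := hD t ht
    have h2 := mul_le_mul_of_nonneg_left h1 (Real.exp_pos (a*t)).le
    have e2 : c * (Real.exp (a*t) * Real.exp (b*t)) = c * Real.exp ((a+b)*t) := by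
      rw [← Real.exp_add]; congr 2; ring
    nlinarith [h2, e2]

lemma gron_eq (a c : ℝ) (u D : ℝ → ℝ)
    (hu : ∀ t ≥ (0:ℝ), HasDerivAt u (D t) t)
    (hD : ∀ t ≥ (0:ℝ), D t ≤ -a * u t + c * Real.exp (-(a * t))) :
    ∀ t ≥ (0:ℝ), u t ≤ (u 0 + c * t) * Real.exp (-(a*t)) := by
  have hF : ∀ t : ℝ, HasDerivAt (fun s => c * s) c t := by
    intro t
    simpa using (hasDerivAt_id t).const_mul c
  have hcore := gron_core a u D _ _ hu hF ?_
  · intro t ht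
    have h2 := hcore t ht
    have key : Real.exp (-(a*t)) * Real.exp (a*t) = 1 := by
      rw [← Real.exp_add]; simp
    have h3 := mul_le_mul_of_nonneg_left h2 (Real.exp_pos (-(a*t))).le
    calc u t = Real.exp (-(a*t)) * (Real.exp (a*t) * u t) := by
              rw [← mul_assoc, key, one_mul]
      _ ≤ Real.exp (-(a*t)) * (u 0 - c * 0 + c * t) := h3
      _ = (u 0 + c*t) * Real.exp (-(a*t)) := by ring
  · intro t ht
    have h1 := hD t ht
    have h2 := mul_le_mul_of_nonneg_left h1 (Real.exp_pos (a*t)).le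
    have e2 : c * (Real.exp (a*t) * Real.exp (-(a*t))) = c := by
      rw [← Real.exp_add]; simp
    nlinarith [h2, e2]

lemma side_translate (Nc β lam ρ0 : ℝ) (Gi Gj Hi Hj DD : ℝ → ℝ)
    (hGi : ∀ t, Gi t = Gi 0 * Real.exp (-Nc * β * ρ0 * t))
    (hGj : ∀ t, Gj t = Gj 0 * Real.exp (-Nc * β * ρ0 * t))
    (hq : ∀ t ≥ (0:ℝ), DD t ≤ -Nc * β * (Hi t - Hj t)
      + (lam * Nc * ρ0 / 2) * ((Gi t)^2 - (Gj t)^2)) :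
    ∀ t ≥ (0:ℝ), DD t ≤ -(Nc*β) * (Hi t - Hj t)
      + (lam * Nc * ρ0 / 2 * ((Gi 0)^2 - (Gj 0)^2)) * Real.exp (-(2*(Nc*β*ρ0)) * t) := by
  have sq' : ∀ (G : ℝ → ℝ), (∀ t, G t = G 0 * Real.exp (-Nc * β * ρ0 * t)) →
      ∀ t, (G t)^2 = (G 0)^2 * Real.exp (-(2*(Nc*β*ρ0)) * t) := by
    intro G hG t
    rw [hG t, mul_pow]
    congr 1
    rw [sq, ← Real.exp_add]
    congr 1
    ring
  intro t ht
  have h1 := hq t ht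
  rw [sq' Gi hGi t, sq' Gj hGj t] at h1
  nlinarith [h1]

lemma tendsto_exp_neg_mul (k : ℝ) (hk : 0 < k) :
    Tendsto (fun t : ℝ => Real.exp (-(k * t))) atTop (nhds 0) :=
  Real.tendsto_exp_atBot.comp (tendsto_neg_atBot_iff.mpr (tendsto_id.const_mul_atTop hk))

lemma tendsto_exp_ct (c : ℝ) (hc : c < 0) :
    Tendsto (fun t : ℝ => Real.exp (c * t)) atTop (nhds 0) :=
  Real.tendsto_exp_atBot.comp ((tendsto_const_mul_atBot_of_neg hc).mpr tendsto_id)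

lemma tendsto_linexp (c0 c1 k : ℝ) (hk : 0 < k) :
    Tendsto (fun t : ℝ => (c0 + c1 * t) * Real.exp (-(k * t))) atTop (nhds 0) := by
  have hbase : Tendsto (fun x : ℝ => x * Real.exp (-x)) atTop (nhds 0) := by
    simpa using Real.tendsto_pow_mul_exp_neg_atTop_nhds_zero 1
  have h2 : Tendsto (fun t : ℝ => (k*t) * Real.exp (-(k*t))) atTop (nhds 0) :=
    hbase.comp (tendsto_id.const_mul_atTop hk)
  have h3 := ((tendsto_exp_neg_mul k hk).const_mul c0).add (h2.const_mul (c1/k))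
  have heq : ∀ t : ℝ, c0 * Real.exp (-(k*t)) + (c1/k) * ((k*t) * Real.exp (-(k*t)))
      = (c0 + c1 * t) * Real.exp (-(k*t)) := by
    intro t
    field_simp
  simpa [heq] using h3

/-- Grönwall-type comparison used in the convergence proof for ρ₊ = ρ₋ = ρ:
the explicit bound on h_i - h_j, and convergence of h_i - h_j to 0 when the
symmetric differential inequality also holds. -/
theorem stmt_15
    (N : ℕ) (hN : 2 ≤ N) (β lam ρ ρ0 : ℝ) (hβ : 0 < β) (hlam : 0 ≤ lam)
    (hρ : ρ ∈ Set.Ioo (0:ℝ) (1/2)) (hρ0 : ρ0 = 1 - 2*ρ)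
    (gi gj hi hj D : ℝ → ℝ)
    (hgi : ∀ t, gi t = gi 0 * Real.exp (-(N:ℝ) * β * ρ0 * t))
    (hgj : ∀ t, gj t = gj 0 * Real.exp (-(N:ℝ) * β * ρ0 * t))
    (hderiv : ∀ t ≥ (0:ℝ), HasDerivAt (fun s => hi s - hj s) (D t) t)
    (hineq : ∀ t ≥ (0:ℝ), D t ≤ -(N:ℝ) * β * (hi t - hj t)
      + (lam * (N:ℝ) * ρ0 / 2) * ((gi t)^2 - (gj t)^2)) :
    (ρ ≠ 1/4 → ∀ t ≥ (0:ℝ),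
      hi t - hj t ≤ (hi 0 - hj 0) * Real.exp (-(N:ℝ) * β * t)
        + ((1 - 2*ρ) * lam * ((gi 0)^2 - (gj 0)^2) / (2 * β * (4*ρ - 1)))
          * (Real.exp (-(2 - 4*ρ) * (N:ℝ) * β * t) - Real.exp (-(N:ℝ) * β * t))) ∧
    ((∀ t ≥ (0:ℝ), -D t ≤ -(N:ℝ) * β * (hj t - hi t)
        + (lam * (N:ℝ) * ρ0 / 2) * ((gj t)^2 - (gi t)^2)) →
      Tendsto (fun t => hi t - hj t) atTop (nhds 0)) := by
  have hNpos : (0:ℝ) < (N:ℝ) := by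
    have : (2:ℝ) ≤ (N:ℝ) := by exact_mod_cast hN
    linarith
  have ha : 0 < (N:ℝ)*β := mul_pos hNpos hβ
  have hρ0pos : 0 < ρ0 := by rw [hρ0]; have := hρ.2; linarith
  have hD1 := side_translate (N:ℝ) β lam ρ0 gi gj hi hj D hgi hgj hineq
  constructor
  · -- explicit bound, ρ ≠ 1/4
    intro hne t ht
    have h41 : 4*ρ - 1 ≠ 0 := by
      intro h; apply hne; linarith
    have hden : (N:ℝ)*β + -(2*((N:ℝ)*β*ρ0)) = ((N:ℝ)*β)*(4*ρ-1) := by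
      rw [hρ0]; ring
    have hr : (N:ℝ)*β + -(2*((N:ℝ)*β*ρ0)) ≠ 0 := by
      rw [hden]; exact mul_ne_zero ha.ne' h41
    have hb := gron_ne ((N:ℝ)*β) (-(2*((N:ℝ)*β*ρ0)))
      (lam * (N:ℝ) * ρ0 / 2 * ((gi 0)^2 - (gj 0)^2))
      (fun s => hi s - hj s) D hr hderiv hD1
    have h2 := hb t ht
    have eA : Real.exp (-((N:ℝ)*β*t)) = Real.exp (-(N:ℝ) * β * t) := by
      congr 1; ring
    have eB : Real.exp (-(2*((N:ℝ)*β*ρ0)) * t) = Real.exp (-(2 - 4*ρ) * (N:ℝ) * β * t) := by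
      congr 1; rw [hρ0]; ring
    rw [eA, eB] at h2
    have ecoef : lam * (N:ℝ) * ρ0 / 2 * ((gi 0)^2 - (gj 0)^2)
        / ((N:ℝ)*β + -(2*((N:ℝ)*β*ρ0)))
        = (1 - 2*ρ) * lam * ((gi 0)^2 - (gj 0)^2) / (2 * β * (4*ρ - 1)) := by
      rw [hden, hρ0]
      field_simp
    rw [ecoef] at h2
    exact h2
  · -- convergence
    intro hsym
    have hdneg : ∀ t ≥ (0:ℝ), HasDerivAt (fun s => hj s - hi s) (-D t) t := by
      intro t ht
      exact (hderiv t ht).neg.congr_of_eventuallyEq (Filter.Eventually.of_forall fun s => by simp)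
    have hD2 := side_translate (N:ℝ) β lam ρ0 gj gi hj hi (fun t => -D t) hgj hgi hsym
    by_cases h14 : ρ = 1/4
    · -- ρ = 1/4 : linear-times-exponential bound
      have eC : ∀ s : ℝ, Real.exp (-(2*((N:ℝ)*β*ρ0)) * s) = Real.exp (-((N:ℝ)*β * s)) := by
        intro s; congr 1; rw [hρ0, h14]; ring
      have hDi : ∀ t ≥ (0:ℝ), D t ≤ -((N:ℝ)*β) * (hi t - hj t)
          + (lam * (N:ℝ) * ρ0 / 2 * ((gi 0)^2 - (gj 0)^2)) * Real.exp (-((N:ℝ)*β * t)) := by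
        intro t ht
        have h := hD1 t ht
        rw [eC t] at h
        exact h
      have hDj : ∀ t ≥ (0:ℝ), -D t ≤ -((N:ℝ)*β) * (hj t - hi t)
          + (lam * (N:ℝ) * ρ0 / 2 * ((gj 0)^2 - (gi 0)^2)) * Real.exp (-((N:ℝ)*β * t)) := by
        intro t ht
        have h := hD2 t ht
        rw [eC t] at h
        exact h
      have hb1 := gron_eq ((N:ℝ)*β) (lam * (N:ℝ) * ρ0 / 2 * ((gi 0)^2 - (gj 0)^2))
        (fun s => hi s - hj s) D hderiv hDi
      have hb2 := gron_eq ((N:ℝ)*β) (lam * (N:ℝ) * ρ0 / 2 * ((gj 0)^2 - (gi 0)^2))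
        (fun s => hj s - hi s) (fun t => -D t) hdneg hDj
      have hU := tendsto_linexp (hi 0 - hj 0)
        (lam * (N:ℝ) * ρ0 / 2 * ((gi 0)^2 - (gj 0)^2)) ((N:ℝ)*β) ha
      have hL := (tendsto_linexp (hj 0 - hi 0)
        (lam * (N:ℝ) * ρ0 / 2 * ((gj 0)^2 - (gi 0)^2)) ((N:ℝ)*β) ha).neg
      rw [neg_zero] at hL
      refine tendsto_of_tendsto_of_tendsto_of_le_of_le' hL hU ?_ ?_
      · filter_upwards [eventually_ge_atTop (0:ℝ)] with t ht
        have := hb2 t ht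
        linarith
      · filter_upwards [eventually_ge_atTop (0:ℝ)] with t ht
        have := hb1 t ht
        linarith
    · -- ρ ≠ 1/4
      have h41 : 4*ρ - 1 ≠ 0 := by
        intro h; apply h14; linarith
      have hden : (N:ℝ)*β + -(2*((N:ℝ)*β*ρ0)) = ((N:ℝ)*β)*(4*ρ-1) := by
        rw [hρ0]; ring
      have hr : (N:ℝ)*β + -(2*((N:ℝ)*β*ρ0)) ≠ 0 := by
        rw [hden]; exact mul_ne_zero ha.ne' h41
      have hb1 := gron_ne ((N:ℝ)*β) (-(2*((N:ℝ)*β*ρ0)))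
        (lam * (N:ℝ) * ρ0 / 2 * ((gi 0)^2 - (gj 0)^2))
        (fun s => hi s - hj s) D hr hderiv hD1
      have hb2 := gron_ne ((N:ℝ)*β) (-(2*((N:ℝ)*β*ρ0)))
        (lam * (N:ℝ) * ρ0 / 2 * ((gj 0)^2 - (gi 0)^2))
        (fun s => hj s - hi s) (fun t => -D t) hr hdneg hD2
      have hEa : Tendsto (fun t : ℝ => Real.exp (-((N:ℝ)*β*t))) atTop (nhds 0) :=
        tendsto_exp_neg_mul ((N:ℝ)*β) ha
      have hEb : Tendsto (fun t : ℝ => Real.exp (-(2*((N:ℝ)*β*ρ0)) * t)) atTop (nhds 0) := by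
        apply tendsto_exp_ct
        nlinarith
      have hBound : ∀ (c0 c1 : ℝ), Tendsto (fun t : ℝ =>
          c0 * Real.exp (-((N:ℝ)*β*t))
          + c1 * (Real.exp (-(2*((N:ℝ)*β*ρ0)) * t) - Real.exp (-((N:ℝ)*β*t))))
          atTop (nhds 0) := by
        intro c0 c1
        have := (hEa.const_mul c0).add ((hEb.sub hEa).const_mul c1)
        simpa using this
      have hU := hBound (hi 0 - hj 0)
        (lam * (N:ℝ) * ρ0 / 2 * ((gi 0)^2 - (gj 0)^2) / ((N:ℝ)*β + -(2*((N:ℝ)*β*ρ0))))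
      have hL := (hBound (hj 0 - hi 0)
        (lam * (N:ℝ) * ρ0 / 2 * ((gj 0)^2 - (gi 0)^2) / ((N:ℝ)*β + -(2*((N:ℝ)*β*ρ0))))).neg
      rw [neg_zero] at hL
      refine tendsto_of_tendsto_of_tendsto_of_le_of_le' hL hU ?_ ?_
      · filter_upwards [eventually_ge_atTop (0:ℝ)] with t ht
        have := hb2 t ht
        linarith
      · filter_upwards [eventually_ge_atTop (0:ℝ)] with t ht
        have := hb1 t ht
        linarith
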